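/- Let (Φ, ω): (V, E) → (V', E') be a strong Dirac morphism of linear Dirac spaces (i.e. E' is the forward image of E under (Φ,ω) and ker(Φ,ω) ∩ E = {0}). Let F' ⊆ 𝕍' be a Lagrangian subspace transverse to E', with backward image F ⊆ 𝕍. Then F is transverse to E, and the bivectors π ∈ ∧²V and π' ∈ ∧²V' defined by the splittings 𝕍 = E ⊕ F and 𝕍' = E' ⊕ F' are Φ-related: (∧²Φ)(π) = π'. -/

import Mathlib

open Module

/-- The relation `w ~_{(Φ,ω)} w'` defined by a morphism `(Φ, ω)`, with the 2-form `ω` encoded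
as a skew-symmetric map `ωm : V → V*` (so `ι(v)ω = ωm v`). -/
def morphRel {K V V' : Type*} [Field K] [AddCommGroup V] [Module K V]
    [AddCommGroup V'] [Module K V']
    (Φ : V →ₗ[K] V') (ωm : V →ₗ[K] Module.Dual K V)
    (w : V × Module.Dual K V) (w' : V' × Module.Dual K V') : Prop :=
  Φ w.1 = w'.1 ∧ w'.2.comp Φ = w.2 + ωm w.1

section Aux

open Module

variable (K V : Type*) [Field K] [AddCommGroup V] [Module K V]

/-- The canonical pairing on `V ⊕ V*`, as a map into the dual. -/
noncomputable def pairB : (V × Dual K V) →ₗ[K] Dual K (V × Dual K V) :=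
  LinearMap.mk₂ K (fun w u => w.2 u.1 + u.2 w.1)
    (fun w₁ w₂ u => by simp; ring)
    (fun c w u => by simp; ring)
    (fun w u₁ u₂ => by simp; ring)
    (fun c w u => by simp; ring)

@[simp] lemma pairB_apply (w u : V × Dual K V) :
    pairB K V w u = w.2 u.1 + u.2 w.1 := rfl

lemma pairB_injective : Function.Injective (pairB K V) := by
  intro a b hab
  have hz : pairB K V (a - b) = 0 := by rw [map_sub, hab, sub_self]
  have h2 : (a - b).2 = 0 := by
    ext x
    have := LinearMap.congr_fun hz (x, 0)
    simpa using this
  have h1 : (a - b).1 = 0 := by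
    refine (Module.forall_dual_apply_eq_zero_iff K _).mp fun φ => ?_
    have := LinearMap.congr_fun hz (0, φ)
    simpa using this
  have : a - b = 0 := Prod.ext h1 h2
  exact sub_eq_zero.mp this

variable [FiniteDimensional K V]

lemma pairB_bijective : Function.Bijective (pairB K V) :=
  ⟨pairB_injective K V,
    (LinearMap.injective_iff_surjective_of_finrank_eq_finrank
      (Subspace.dual_finrank_eq).symm).mp (pairB_injective K V)⟩

/-- orthogonal complement w.r.t. the pairing, of the span of a set. -/
noncomputable def pairPerp (S : Set (V × Dual K V)) : Submodule K (V × Dual K V) :=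
  (Submodule.span K S).dualAnnihilator.comap (pairB K V)

lemma mem_pairPerp_iff (S : Set (V × Dual K V)) (w : V × Dual K V) :
    w ∈ pairPerp K V S ↔ ∀ u ∈ S, w.2 u.1 + u.2 w.1 = 0 := by
  rw [pairPerp, Submodule.mem_comap, Submodule.mem_dualAnnihilator]
  constructor
  · intro h u hu
    simpa using h u (Submodule.subset_span hu)
  · intro h u hu
    have hle : Submodule.span K S ≤ LinearMap.ker (pairB K V w) :=
      Submodule.span_le.mpr fun x hx => LinearMap.mem_ker.mpr (by simpa using h x hx)
    exact hle hu

lemma finrank_pairPerp (W : Submodule K (V × Dual K V)) :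
    finrank K (W.dualAnnihilator.comap (pairB K V)) + finrank K W
      = finrank K (V × Dual K V) := by
  let e := LinearEquiv.ofBijective (pairB K V) (pairB_bijective K V)
  have h1 : W.dualAnnihilator.comap (pairB K V)
      = W.dualAnnihilator.comap (e : (V × Dual K V) →ₗ[K] Dual K (V × Dual K V)) := rfl
  rw [h1, Submodule.comap_equiv_eq_map_symm, LinearEquiv.finrank_map_eq]
  have h2 : finrank K W.dualAnnihilator = finrank K ((V × Dual K V) ⧸ W) :=
    (LinearEquiv.finrank_eq (Subspace.quotEquivAnnihilator W)).symm
  rw [h2, Submodule.finrank_quotient_add_finrank]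

end Aux

lemma factor_extend {K A B : Type*} [Field K] [AddCommGroup A] [Module K A]
    [AddCommGroup B] [Module K B] (D : A →ₗ[K] B) (h : A →ₗ[K] K)
    (hker : LinearMap.ker D ≤ LinearMap.ker h) :
    ∃ ξ : Module.Dual K B, ∀ z, ξ (D z) = h z := by
  obtain ⟨ξ, hξ⟩ := LinearMap.exists_extend (((LinearMap.ker D).liftQ h hker).comp
    D.quotKerEquivRange.symm.toLinearMap)
  refine ⟨ξ, fun z => ?_⟩
  have h1 : D z = (LinearMap.range D).subtype ⟨D z, LinearMap.mem_range_self D z⟩ := rfl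
  rw [h1, ← LinearMap.comp_apply, hξ]
  simp only [LinearMap.comp_apply, LinearEquiv.coe_coe, LinearEquiv.coe_toLinearMap]
  rw [LinearMap.quotKerEquivRange_symm_apply_image D z]
  simp [Submodule.liftQ_apply]

set_option maxHeartbeats 1600000 in
set_option synthInstance.maxHeartbeats 400000 in
/-- let `(Φ, ω) : (V, E) → (V', E')` be a strong Dirac morphism of linear
Dirac spaces, `F'` a Lagrangian complement of `E'`, and `F` the backward image of `F'`.
Then `F` is transverse to `E`, and the bivectors `π`, `π'` of the splittings `E ⊕ F` and
`E' ⊕ F'` (characterized by `π^♯(α) = -pr(p(α))` for the projections `p`, `p'` onto `E`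
along `F` resp. onto `E'` along `F'`) are `Φ`-related: `Φ ∘ π^♯ ∘ Φ* = π'^♯`. -/
theorem pure_spinors_stmt15 {K V V' : Type*} [Field K] [CharZero K]
    [AddCommGroup V] [Module K V] [FiniteDimensional K V]
    [AddCommGroup V'] [Module K V'] [FiniteDimensional K V']
    (Φ : V →ₗ[K] V') (ωm : V →ₗ[K] Module.Dual K V) (halt : ∀ v, ωm v v = 0)
    (E : Set (V × Module.Dual K V)) (E' F' : Set (V' × Module.Dual K V'))
    (hElag : ∀ w, w ∈ E ↔ ∀ u ∈ E, w.2 u.1 + u.2 w.1 = 0)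
    (hE'lag : ∀ w', w' ∈ E' ↔ ∀ u' ∈ E', w'.2 u'.1 + u'.2 w'.1 = 0)
    (hF'lag : ∀ w', w' ∈ F' ↔ ∀ u' ∈ F', w'.2 u'.1 + u'.2 w'.1 = 0)
    -- `(Φ, ω)` is a Dirac morphism: `E'` is the forward image of `E`
    (hforward : ∀ w', w' ∈ E' ↔ ∃ w ∈ E, morphRel Φ ωm w w')
    -- the Dirac morphism is strong: `ker(Φ,ω) ∩ E = {0}`
    (hstrong : ∀ v : V, Φ v = 0 → ((v, -(ωm v)) : V × Module.Dual K V) ∈ E → v = 0)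
    -- `F'` is transverse to `E'`
    (htrans' : ∀ w', w' ∈ E' → w' ∈ F' → w' = 0)
    (hspan' : ∀ w' : V' × Module.Dual K V', ∃ u' ∈ E', ∃ x' ∈ F', w' = u' + x')
    -- `F` is the backward image of `F'`
    (F : Set (V × Module.Dual K V))
    (hF : F = {w | ∃ w' ∈ F', morphRel Φ ωm w w'}) :
    ((∀ w, w ∈ E → w ∈ F → w = 0) ∧
      (∀ w : V × Module.Dual K V, ∃ u ∈ E, ∃ x ∈ F, w = u + x)) ∧
    (∀ (p : (V × Module.Dual K V) →ₗ[K] (V × Module.Dual K V))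
       (p' : (V' × Module.Dual K V') →ₗ[K] (V' × Module.Dual K V')),
      (∀ w ∈ E, p w = w) → (∀ w ∈ F, p w = 0) →
      (∀ w' ∈ E', p' w' = w') → (∀ w' ∈ F', p' w' = 0) →
      ∀ α' : Module.Dual K V',
        Φ (-(p ((0 : V), α'.comp Φ)).1) = -(p' ((0 : V'), α')).1) := by
  -- skew-symmetry of ωm
  have hskew : ∀ a b : V, ωm a b = -(ωm b a) := by
    intro a b
    have h := halt (a + b)
    simp only [map_add, LinearMap.add_apply, halt a, halt b] at h
    linear_combination h
  -- transversality E ∩ F = 0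
  have htrans : ∀ w, w ∈ E → w ∈ F → w = 0 := by
    intro w hwE hwF
    rw [hF] at hwF
    obtain ⟨w', hw'F', hrel⟩ := hwF
    have hw'E' : w' ∈ E' := (hforward w').mpr ⟨w, hwE, hrel⟩
    have hw'0 : w' = 0 := htrans' w' hw'E' hw'F'
    obtain ⟨hrel1, hrel2⟩ := hrel
    rw [hw'0] at hrel1 hrel2
    have hΦ : Φ w.1 = 0 := by simpa using hrel1
    have hα : w.2 = -(ωm w.1) := by
      have : (0 : Module.Dual K V) = w.2 + ωm w.1 := by simpa using hrel2
      linear_combination (norm := module) -this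
    have hw1 : w.1 = 0 := by
      apply hstrong w.1 hΦ
      have : ((w.1, -(ωm w.1)) : V × Module.Dual K V) = w := by
        rw [← hα]
      rwa [this]
    have hw2 : w.2 = 0 := by rw [hα, hw1, map_zero, neg_zero]
    exact Prod.ext hw1 hw2
  -- the submodule with carrier F'
  set F's : Submodule K (V' × Module.Dual K V') := pairPerp K V' F' with hF'sdef
  have hF'car : ∀ w', w' ∈ F's ↔ w' ∈ F' := by
    intro w'
    rw [hF'sdef, mem_pairPerp_iff, ← hF'lag]
  -- membership in F, explicitly
  have hFmem : ∀ w : V × Module.Dual K V,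
      w ∈ F ↔ ∃ w' ∈ F', Φ w.1 = w'.1 ∧ w'.2.comp Φ = w.2 + ωm w.1 := by
    intro w; rw [hF]; rfl
  -- isotropy of F
  have hFiso : ∀ x ∈ F, ∀ y ∈ F, x.2 y.1 + y.2 x.1 = 0 := by
    intro x hx y hy
    obtain ⟨x', hx'F', hx1, hx2⟩ := (hFmem x).mp hx
    obtain ⟨y', hy'F', hy1, hy2⟩ := (hFmem y).mp hy
    have e1 := LinearMap.congr_fun hx2 y.1
    have e2 := LinearMap.congr_fun hy2 x.1
    simp only [LinearMap.comp_apply, LinearMap.add_apply] at e1 e2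
    have hiso' : x'.2 y'.1 + y'.2 x'.1 = 0 := (hF'lag x').mp hx'F' y' hy'F'
    rw [← hx1, ← hy1] at hiso'
    have hs := hskew x.1 y.1
    linear_combination hiso' - e1 - e2 - hs
  -- coisotropy of F
  have hFco : ∀ w : V × Module.Dual K V, (∀ x ∈ F, w.2 x.1 + x.2 w.1 = 0) → w ∈ F := by
    intro w hw
    -- the map (v₁, x') ↦ Φ v₁ + x'.1 and the functional to factor
    set D : (V × F's) →ₗ[K] V' :=
      Φ.comp (LinearMap.fst K V F's)
        + (LinearMap.fst K V' (Module.Dual K V')).comp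
            (F's.subtype.comp (LinearMap.snd K V F's)) with hDdef
    set h : (V × F's) →ₗ[K] K :=
      (w.2 + ωm w.1).comp (LinearMap.fst K V F's)
        - (Module.Dual.eval K V' (Φ w.1)).comp
            ((LinearMap.snd K V' (Module.Dual K V')).comp
              (F's.subtype.comp (LinearMap.snd K V F's))) with hhdef
    have hDapp : ∀ z : V × F's, D z = Φ z.1 + (z.2 : V' × Module.Dual K V').1 := by
      intro z; simp [hDdef]
    have hhapp : ∀ z : V × F's,
        h z = w.2 z.1 + ωm w.1 z.1 - (z.2 : V' × Module.Dual K V').2 (Φ w.1) := by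
      intro z; simp [hhdef]
    have hker : LinearMap.ker D ≤ LinearMap.ker h := by
      intro z hz
      rw [LinearMap.mem_ker, hDapp] at hz
      rw [LinearMap.mem_ker, hhapp]
      -- the backward image of z.2 through the relation, shifted by -z.1
      set x : V × Module.Dual K V :=
        (-z.1, (z.2 : V' × Module.Dual K V').2.comp Φ + ωm z.1) with hxdef
      have hxF : x ∈ F := by
        rw [hFmem]
        refine ⟨(z.2 : V' × Module.Dual K V'), (hF'car _).mp z.2.2, ?_, ?_⟩
        · show Φ (-z.1) = _
          rw [map_neg]
          linear_combination (norm := module) -hz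
        · show _ = ((z.2 : V' × Module.Dual K V').2.comp Φ + ωm z.1) + ωm (-z.1)
          rw [map_neg]
          abel
      have H0 := hw x hxF
      rw [hxdef] at H0
      simp only [LinearMap.add_apply, LinearMap.comp_apply, map_neg] at H0
      have hs := hskew z.1 w.1
      linear_combination -H0 + hs
    -- factor h through D and extend to a functional ξ on V'
    obtain ⟨ξ, hkey⟩ := factor_extend (K := K) (A := V × F's) (B := V') D h hker
    refine (hFmem w).mpr ⟨(Φ w.1, ξ), ?_, rfl, ?_⟩
    · -- (Φ w.1, ξ) ∈ F'
      rw [hF'lag]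
      intro u' hu'F'
      have := hkey (0, ⟨u', (hF'car u').mpr hu'F'⟩)
      rw [hDapp, hhapp] at this
      simp only [map_zero, zero_add, LinearMap.zero_apply] at this
      simp only [this]
      ring
    · -- ξ ∘ Φ = w.2 + ωm w.1
      ext v₁
      have := hkey (v₁, 0)
      rw [hDapp, hhapp] at this
      simp only [Submodule.coe_zero, Prod.fst_zero, Prod.snd_zero, add_zero,
        LinearMap.zero_apply, map_zero, sub_zero] at this
      simpa using this
  -- submodules with carriers E and F
  set Es : Submodule K (V × Module.Dual K V) := pairPerp K V E with hEsdef
  have hEcar : ∀ w, w ∈ Es ↔ w ∈ E := by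
    intro w; rw [hEsdef, mem_pairPerp_iff, ← hElag]
  set Fs : Submodule K (V × Module.Dual K V) := pairPerp K V F with hFsdef
  have hFcar : ∀ w, w ∈ Fs ↔ w ∈ F := by
    intro w
    rw [hFsdef, mem_pairPerp_iff]
    constructor
    · intro hw; exact hFco w hw
    · intro hw u hu
      have := hFiso u hu w hw
      linear_combination this
  -- finrank computations
  have hMrank : finrank K (V × Module.Dual K V) = 2 * finrank K V := by
    rw [Module.finrank_prod, Subspace.dual_finrank_eq]; ring
  have hhalf : ∀ S : Set (V × Module.Dual K V),
      (pairPerp K V S : Set (V × Module.Dual K V)) = S →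
        finrank K (pairPerp K V S) = finrank K V := by
    intro S hS
    have e1 : pairPerp K V ((pairPerp K V S : Set (V × Module.Dual K V)))
        = (pairPerp K V S).dualAnnihilator.comap (pairB K V) := by
      simp only [pairPerp, Submodule.span_eq]
    have h2 := finrank_pairPerp K V (pairPerp K V S)
    rw [← e1, hS, hMrank] at h2
    omega
  have hEfin : finrank K Es = finrank K V := by
    rw [hEsdef]
    exact hhalf E (by ext w; exact hEcar w)
  have hFfin : finrank K Fs = finrank K V := by
    rw [hFsdef]
    exact hhalf F (by ext w; exact hFcar w)
  have hdisj : Disjoint Es Fs := by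
    rw [Submodule.disjoint_def]
    intro w hwE hwF
    exact htrans w ((hEcar w).mp hwE) ((hFcar w).mp hwF)
  have htop : Es ⊔ Fs = ⊤ := by
    apply Submodule.eq_top_of_disjoint _ _ _ hdisj
    rw [hEfin, hFfin, hMrank]; omega
  have hspan : ∀ w : V × Module.Dual K V, ∃ u ∈ E, ∃ x ∈ F, w = u + x := by
    intro w
    have hw : w ∈ Es ⊔ Fs := htop ▸ Submodule.mem_top
    obtain ⟨u, hu, x, hx, hux⟩ := Submodule.mem_sup.mp hw
    exact ⟨u, (hEcar u).mp hu, x, (hFcar x).mp hx, hux.symm⟩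
  refine ⟨⟨htrans, hspan⟩, ?_⟩
  -- part 2: the bivectors are Φ-related
  intro p p' hpE hpF hp'E' hp'F' α'
  obtain ⟨u, huE, x, hxF, hdec⟩ := hspan ((0 : V), α'.comp Φ)
  obtain ⟨x', hx'F', hx1, hx2⟩ := (hFmem x).mp hxF
  set u' : V' × Module.Dual K V' := ((0 : V'), α') - x' with hu'def
  have hu1 : u.1 = -x.1 := by
    have := congrArg Prod.fst hdec
    simp only [Prod.fst_add] at this
    linear_combination (norm := module) -this
  have hu2 : u.2 = α'.comp Φ - x.2 := by
    have := congrArg Prod.snd hdec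
    simp only [Prod.snd_add] at this
    linear_combination (norm := module) -this
  have hrelu : morphRel Φ ωm u u' := by
    constructor
    · show Φ u.1 = ((0 : V'), α').1 - x'.1
      rw [hu1, map_neg, hx1]
      show -x'.1 = 0 - x'.1
      rw [zero_sub]
    · show (((0 : V'), α').2 - x'.2).comp Φ = u.2 + ωm u.1
      rw [hu1, hu2, map_neg]
      have : (α' - x'.2).comp Φ = α'.comp Φ - x'.2.comp Φ := by
        ext v₁; simp
      rw [this, hx2]
      abel
  have hu'E' : u' ∈ E' := (hforward u').mpr ⟨u, huE, hrelu⟩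
  have hp_eq : p ((0 : V), α'.comp Φ) = u := by
    rw [hdec, map_add, hpE u huE, hpF x hxF, add_zero]
  have hdec' : ((0 : V'), α') = u' + x' := by
    rw [hu'def]; abel
  have hp'_eq : p' ((0 : V'), α') = u' := by
    rw [hdec', map_add, hp'E' u' hu'E', hp'F' x' hx'F', add_zero]
  rw [hp_eq, hp'_eq, map_neg, hrelu.1]
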